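/- Fix coprime integers a, b with b > 0 and α ≤ a/b. Let M be a positive integer with a/b + 1/M ≤ β. Then for every integer n ≥ max(M, b·N) there exists r ∈ {1, …, b} such that b divides n·a + r, and writing (n·a+r)/(b·n) = p/q in lowest terms one has p/q ∈ [α, β], q ≥ N, and q divides n. -/

import Mathlib

/-- Fix coprime `a, b` with `b > 0` and `α ≤ a/b`, and a positive integer `M` with
`a/b + 1/M ≤ β`. For every integer `n ≥ max(M, b·N)` there exists `r ∈ {1,…,b}` with
`b ∣ n·a + r`, and writing `(n·a+r)/(b·n) = p/q` in lowest terms, `p/q ∈ [α, β]`,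
`q ≥ N` and `q ∣ n`. -/
theorem stmt_3 (N : ℕ) (hN : 0 < N) (α β : ℝ) (a b : ℤ) (hb : 0 < b)
    (hab : Int.gcd a b = 1) (hα : α ≤ (a : ℝ) / (b : ℝ)) (M : ℤ) (hM : 0 < M)
    (hβ : (a : ℝ) / (b : ℝ) + 1 / (M : ℝ) ≤ β)
    (n : ℤ) (hn : max M (b * (N : ℤ)) ≤ n) :
    ∃ r : ℤ, 1 ≤ r ∧ r ≤ b ∧ b ∣ n * a + r ∧
      ∃ (p : ℤ) (q : ℕ), 0 < q ∧ Int.gcd p (q : ℤ) = 1 ∧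
        (p : ℝ) / (q : ℝ) = ((n * a + r : ℤ) : ℝ) / ((b * n : ℤ) : ℝ) ∧
        α ≤ (p : ℝ) / (q : ℝ) ∧ (p : ℝ) / (q : ℝ) ≤ β ∧ N ≤ q ∧ (q : ℤ) ∣ n := by
  have hn1 : M ≤ n := le_trans (le_max_left _ _) hn
  have hn2 : b * N ≤ n := le_trans (le_max_right _ _) hn
  have hnpos : 0 < n := lt_of_lt_of_le hM hn1
  set r : ℤ := b - n * a % b with hr
  have hmod : 0 ≤ n * a % b := Int.emod_nonneg (n * a) (ne_of_gt hb)
  have hmodlt : n * a % b < b := Int.emod_lt_of_pos (n * a) hb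
  have hr1 : 1 ≤ r := by omega
  have hrb : r ≤ b := by omega
  have hdvd : b ∣ n * a + r := by
    have h1 : b ∣ n * a - n * a % b := Int.dvd_self_sub_of_emod_eq rfl
    have h2 : n * a + r = (n * a - n * a % b) + b := by omega
    rw [h2]; exact dvd_add h1 dvd_rfl
  refine ⟨r, hr1, hrb, hdvd, ?_⟩
  obtain ⟨m, hm⟩ := hdvd
  set g : ℕ := Int.gcd m n with hg
  have hgpos : 0 < g := Int.gcd_pos_of_ne_zero_right m (ne_of_gt hnpos)
  have hgm : (g : ℤ) ∣ m := Int.gcd_dvd_left m n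
  have hgn : (g : ℤ) ∣ n := Int.gcd_dvd_right m n
  set p : ℤ := m / g with hpdef
  set q' : ℤ := n / g with hq'def
  have hpg : p * g = m := Int.ediv_mul_cancel hgm
  have hqg : q' * g = n := Int.ediv_mul_cancel hgn
  have hq'pos : 0 < q' := by
    rcases lt_trichotomy q' 0 with h | h | h
    · exfalso; nlinarith [hqg, hnpos, (Int.natCast_pos.mpr hgpos)]
    · rw [h] at hqg; simp at hqg; omega
    · exact h
  have hcop : Int.gcd p q' = 1 := Int.gcd_div_gcd_div_gcd hgpos
  have hcast : ((q'.toNat : ℕ) : ℝ) = (q' : ℝ) := by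
    exact_mod_cast Int.toNat_of_nonneg hq'pos.le
  have hb' : (0:ℝ) < b := by exact_mod_cast hb
  have hn' : (0:ℝ) < n := by exact_mod_cast hnpos
  have hq'' : (0:ℝ) < q' := by exact_mod_cast hq'pos
  have hg' : (0:ℝ) < g := by exact_mod_cast hgpos
  have hM' : (0:ℝ) < M := by exact_mod_cast hM
  have hpgR : (p : ℝ) * g = m := by exact_mod_cast hpg
  have hqgR : (q' : ℝ) * g = n := by exact_mod_cast hqg
  have hmR : (n : ℝ) * a + r = b * m := by exact_mod_cast hm
  have hval : (p : ℝ) / q' = (m : ℝ) / n := by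
    rw [div_eq_div_iff hq''.ne' hn'.ne']
    linear_combination (q' : ℝ) * hpgR - (p : ℝ) * hqgR
  have hdiff : (m : ℝ) / n - (a : ℝ) / b = (r : ℝ) / (b * n) := by
    field_simp
    linear_combination (-1 : ℝ) * hmR
  have hr1' : (1:ℝ) ≤ r := by exact_mod_cast hr1
  have hrb' : (r:ℝ) ≤ b := by exact_mod_cast hrb
  have hMn : (M:ℝ) ≤ n := by exact_mod_cast hn1
  have hupper : (r : ℝ) / (b * n) ≤ 1 / M := by
    rw [div_le_div_iff₀ (by positivity) hM']
    nlinarith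
  have hrpos : (0:ℝ) < (r : ℝ) / (b * n) := by positivity
  refine ⟨p, q'.toNat, by omega, ?_, ?_, ?_, ?_, ?_, ?_⟩
  · rwa [Int.toNat_of_nonneg hq'pos.le]
  · rw [hcast, hval]
    push_cast
    rw [div_eq_div_iff hn'.ne' (by positivity)]
    linear_combination (-(n : ℝ)) * hmR
  · rw [hcast, hval]; linarith [hdiff]
  · rw [hcast, hval]; linarith [hdiff]
  · have hgr : (g : ℤ) ∣ r := by
      have h3 : r = b * m - n * a := by omega
      rw [h3]
      exact dvd_sub (Dvd.dvd.mul_left hgm b) (Dvd.dvd.mul_right hgn a)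
    have hgb : (g : ℤ) ≤ b := le_trans (Int.le_of_dvd (by omega) hgr) hrb
    have hNq : (N : ℤ) ≤ q' := by
      nlinarith [hqg, hn2, Int.natCast_pos.mpr hgpos, hq'pos]
    omega
  · rw [Int.toNat_of_nonneg hq'pos.le]
    exact ⟨g, hqg.symm⟩
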